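/- Let e, s : (0,∞) × (0,∞) → ℝ be twice continuously differentiable and P : (0,∞) × (0,∞) → ℝ be continuously differentiable, satisfying the Gibbs relation ∂_θ e = θ ∂_θ s and ∂_ρ e = θ ∂_ρ s + P/ρ² and the thermodynamic stability conditions ∂_ρ P(ρ,θ) > 0 and ∂_θ e(ρ,θ) > 0 for all ρ, θ > 0. Then for every compact set K = [ρ₀′,ρ₁′] × [θ₀′,θ₁′] ⊂ (0,∞)² there exists c > 0 such that for all (ρ,θ) ∈ K and (ρ′,θ′) ∈ K: Γ(ρ,θ|ρ′,θ′) ≥ c·(|ρ − ρ′|² + |θ − θ′|²). -/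

import Mathlib

/-- Ballistic free energy `H_C(ρ,θ) = ρ e(ρ,θ) − C ρ s(ρ,θ)`. -/
noncomputable def ballisticH (e s : ℝ × ℝ → ℝ) (C ρ θ : ℝ) : ℝ :=
  ρ * e (ρ, θ) - C * (ρ * s (ρ, θ))

/-- Relative entropy
`Γ(ρ,θ|ρ′,θ′) = H_{θ′}(ρ,θ) − ∂_ρ H_{θ′}(ρ′,θ′)·(ρ − ρ′) − H_{θ′}(ρ′,θ′)`,
where `∂_ρ H_{θ′}(ρ′,θ′)` is the derivative of `ρ ↦ H_{θ′}(ρ,θ′)` at `ρ′`. -/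
noncomputable def relEntropy (e s : ℝ × ℝ → ℝ) (ρ θ ρ' θ' : ℝ) : ℝ :=
  ballisticH e s θ' ρ θ -
    deriv (fun r : ℝ => ballisticH e s θ' r θ') ρ' * (ρ - ρ') -
    ballisticH e s θ' ρ' θ'

open Set

lemma slice_fst' {f : ℝ × ℝ → ℝ} {a b : ℝ} (hf : DifferentiableAt ℝ f (a, b)) :
    HasDerivAt (fun r => f (r, b)) (fderiv ℝ f (a, b) (1, 0)) a :=
  hf.hasFDerivAt.comp_hasDerivAt a (HasDerivAt.prodMk (hasDerivAt_id a) (hasDerivAt_const a b))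

lemma slice_snd' {f : ℝ × ℝ → ℝ} {a b : ℝ} (hf : DifferentiableAt ℝ f (a, b)) :
    HasDerivAt (fun t => f (a, t)) (fderiv ℝ f (a, b) (0, 1)) b :=
  hf.hasFDerivAt.comp_hasDerivAt b (HasDerivAt.prodMk (hasDerivAt_const b a) (hasDerivAt_id b))

/-- under the Gibbs relation and thermodynamic stability, on every
compact set `K = [ρ₀′,ρ₁′] × [θ₀′,θ₁′] ⊂ (0,∞)²` there is `c > 0` with
`Γ(ρ,θ|ρ′,θ′) ≥ c·(|ρ − ρ′|² + |θ − θ′|²)` for all `(ρ,θ), (ρ′,θ′) ∈ K`. -/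
theorem relEntropy_quadratic_lower_bound (e s P : ℝ × ℝ → ℝ)
    (he : ContDiffOn ℝ 2 e (Set.Ioi (0 : ℝ) ×ˢ Set.Ioi (0 : ℝ)))
    (hs : ContDiffOn ℝ 2 s (Set.Ioi (0 : ℝ) ×ˢ Set.Ioi (0 : ℝ)))
    (hP : ContDiffOn ℝ 1 P (Set.Ioi (0 : ℝ) ×ˢ Set.Ioi (0 : ℝ)))
    (gibbs1 : ∀ ρ θ : ℝ, 0 < ρ → 0 < θ →
      fderiv ℝ e (ρ, θ) (0, 1) = θ * fderiv ℝ s (ρ, θ) (0, 1))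
    (gibbs2 : ∀ ρ θ : ℝ, 0 < ρ → 0 < θ →
      fderiv ℝ e (ρ, θ) (1, 0) = θ * fderiv ℝ s (ρ, θ) (1, 0) + P (ρ, θ) / ρ ^ 2)
    (hstabP : ∀ ρ θ : ℝ, 0 < ρ → 0 < θ → 0 < fderiv ℝ P (ρ, θ) (1, 0))
    (hstabe : ∀ ρ θ : ℝ, 0 < ρ → 0 < θ → 0 < fderiv ℝ e (ρ, θ) (0, 1))
    (ρ₀' ρ₁' θ₀' θ₁' : ℝ) (hρ₀ : 0 < ρ₀') (hρ₁ : ρ₀' ≤ ρ₁') (hθ₀ : 0 < θ₀') (hθ₁ : θ₀' ≤ θ₁') :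
    ∃ c : ℝ, 0 < c ∧
      ∀ ρ θ ρ' θ' : ℝ, ρ ∈ Set.Icc ρ₀' ρ₁' → θ ∈ Set.Icc θ₀' θ₁' →
        ρ' ∈ Set.Icc ρ₀' ρ₁' → θ' ∈ Set.Icc θ₀' θ₁' →
        c * (|ρ - ρ'| ^ 2 + |θ - θ'| ^ 2) ≤ relEntropy e s ρ θ ρ' θ' := by
  have hUopen : IsOpen (Ioi (0:ℝ) ×ˢ Ioi (0:ℝ)) := isOpen_Ioi.prod isOpen_Ioi
  have hede : ∀ {a b : ℝ}, 0 < a → 0 < b → DifferentiableAt ℝ e (a, b) := by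
    intro a b ha hb
    exact (he.contDiffAt (hUopen.mem_nhds (Set.mk_mem_prod ha hb))).differentiableAt
      (by norm_num)
  have hsde : ∀ {a b : ℝ}, 0 < a → 0 < b → DifferentiableAt ℝ s (a, b) := by
    intro a b ha hb
    exact (hs.contDiffAt (hUopen.mem_nhds (Set.mk_mem_prod ha hb))).differentiableAt
      (by norm_num)
  have hPde : ∀ {a b : ℝ}, 0 < a → 0 < b → DifferentiableAt ℝ P (a, b) := by
    intro a b ha hb
    exact (hP.contDiffAt (hUopen.mem_nhds (Set.mk_mem_prod ha hb))).differentiableAt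
      (by norm_num)
  -- the compact set
  set K : Set (ℝ × ℝ) := Icc ρ₀' ρ₁' ×ˢ Icc θ₀' θ₁' with hKdef
  have hKsub : K ⊆ Ioi (0:ℝ) ×ˢ Ioi (0:ℝ) := fun x hx =>
    ⟨lt_of_lt_of_le hρ₀ hx.1.1, lt_of_lt_of_le hθ₀ hx.2.1⟩
  have hKcpt : IsCompact K := isCompact_Icc.prod isCompact_Icc
  have hKne : K.Nonempty := ⟨(ρ₀', θ₀'), ⟨⟨le_rfl, hρ₁⟩, ⟨le_rfl, hθ₁⟩⟩⟩
  -- continuous coefficient functions and their minima on K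
  have hPc : ContinuousOn (fun x : ℝ × ℝ => fderiv ℝ P x (1, 0) / x.1) K :=
    (((hP.continuousOn_fderiv_of_isOpen hUopen le_rfl).mono hKsub).clm_apply
      continuousOn_const).div continuous_fst.continuousOn
      (fun x hx => ne_of_gt (lt_of_lt_of_le hρ₀ hx.1.1))
  have hec : ContinuousOn (fun x : ℝ × ℝ => x.1 * fderiv ℝ e x (0, 1) / x.2) K :=
    (continuous_fst.continuousOn.mul
      (((he.continuousOn_fderiv_of_isOpen hUopen (by norm_num)).mono hKsub).clm_apply
        continuousOn_const)).div continuous_snd.continuousOn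
      (fun x hx => ne_of_gt (lt_of_lt_of_le hθ₀ hx.2.1))
  obtain ⟨a, haK, hamin⟩ := hKcpt.exists_isMinOn hKne hPc
  obtain ⟨b, hbK, hbmin⟩ := hKcpt.exists_isMinOn hKne hec
  set m₁ : ℝ := fderiv ℝ P a (1, 0) / a.1 with hm₁def
  set m₂ : ℝ := b.1 * fderiv ℝ e b (0, 1) / b.2 with hm₂def
  have ha1 : 0 < a.1 := lt_of_lt_of_le hρ₀ haK.1.1
  have ha2 : 0 < a.2 := lt_of_lt_of_le hθ₀ haK.2.1
  have hb1 : 0 < b.1 := lt_of_lt_of_le hρ₀ hbK.1.1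
  have hb2 : 0 < b.2 := lt_of_lt_of_le hθ₀ hbK.2.1
  have hm₁pos : 0 < m₁ := by
    have := hstabP a.1 a.2 ha1 ha2
    rw [Prod.mk.eta] at this
    exact div_pos this ha1
  have hm₂pos : 0 < m₂ := by
    have := hstabe b.1 b.2 hb1 hb2
    rw [Prod.mk.eta] at this
    exact div_pos (mul_pos hb1 this) hb2
  have hm₁le : ∀ {x y : ℝ}, x ∈ Icc ρ₀' ρ₁' → y ∈ Icc θ₀' θ₁' →
      m₁ ≤ fderiv ℝ P (x, y) (1, 0) / x := by
    intro x y hx hy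
    exact isMinOn_iff.mp hamin (x, y) (Set.mk_mem_prod hx hy)
  have hm₂le : ∀ {x y : ℝ}, x ∈ Icc ρ₀' ρ₁' → y ∈ Icc θ₀' θ₁' →
      m₂ ≤ x * fderiv ℝ e (x, y) (0, 1) / y := by
    intro x y hx hy
    exact isMinOn_iff.mp hbmin (x, y) (Set.mk_mem_prod hx hy)
  refine ⟨min m₁ m₂ / 2, by positivity, ?_⟩
  intro ρ θ ρ' θ' hρm hθm hρ'm hθ'm
  have hρpos : 0 < ρ := lt_of_lt_of_le hρ₀ hρm.1
  have hθpos : 0 < θ := lt_of_lt_of_le hθ₀ hθm.1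
  have hρ'pos : 0 < ρ' := lt_of_lt_of_le hρ₀ hρ'm.1
  have hθ'pos : 0 < θ' := lt_of_lt_of_le hθ₀ hθ'm.1
  -- φ is the ρ-derivative of r ↦ H_{θ'}(r,θ')
  set φ : ℝ → ℝ := fun r => e (r, θ') - θ' * s (r, θ') + P (r, θ') / r with hφdef
  have hHder : ∀ r ∈ Icc ρ₀' ρ₁',
      HasDerivAt (fun x : ℝ => ballisticH e s θ' x θ') (φ r) r := by
    intro r hr
    have hrpos : 0 < r := lt_of_lt_of_le hρ₀ hr.1
    have de := slice_fst' (hede hrpos hθ'pos)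
    have ds := slice_fst' (hsde hrpos hθ'pos)
    have key : HasDerivAt (fun x : ℝ => x * e (x, θ') - θ' * (x * s (x, θ')))
        ((1 * e (r, θ') + r * fderiv ℝ e (r, θ') (1, 0)) -
          θ' * (1 * s (r, θ') + r * fderiv ℝ s (r, θ') (1, 0))) r :=
      ((hasDerivAt_id r).mul de).sub (((hasDerivAt_id r).mul ds).const_mul θ')
    have : (1 * e (r, θ') + r * fderiv ℝ e (r, θ') (1, 0)) -
          θ' * (1 * s (r, θ') + r * fderiv ℝ s (r, θ') (1, 0)) = φ r := by
      rw [gibbs2 r θ' hrpos hθ'pos, hφdef]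
      field_simp
      ring
    rw [this] at key
    exact key
  have hderivH : deriv (fun r : ℝ => ballisticH e s θ' r θ') ρ' = φ ρ' :=
    (hHder ρ' hρ'm).deriv
  -- w = φ - m₁ · id is monotone on [ρ₀', ρ₁']
  set w : ℝ → ℝ := fun r => φ r - m₁ * r with hwdef
  have hwder : ∀ r ∈ Icc ρ₀' ρ₁',
      HasDerivAt w (fderiv ℝ P (r, θ') (1, 0) / r - m₁) r := by
    intro r hr
    have hrpos : 0 < r := lt_of_lt_of_le hρ₀ hr.1
    have de := slice_fst' (hede hrpos hθ'pos)
    have ds := slice_fst' (hsde hrpos hθ'pos)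
    have dP := slice_fst' (hPde hrpos hθ'pos)
    have key : HasDerivAt w
        ((fderiv ℝ e (r, θ') (1, 0) - θ' * fderiv ℝ s (r, θ') (1, 0) +
          (fderiv ℝ P (r, θ') (1, 0) * r - P (r, θ') * 1) / r ^ 2) - m₁ * 1) r :=
      ((de.sub (ds.const_mul θ')).add (dP.div (hasDerivAt_id r) (ne_of_gt hrpos))).sub
        ((hasDerivAt_id r).const_mul m₁)
    have : (fderiv ℝ e (r, θ') (1, 0) - θ' * fderiv ℝ s (r, θ') (1, 0) +
          (fderiv ℝ P (r, θ') (1, 0) * r - P (r, θ') * 1) / r ^ 2) - m₁ * 1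
        = fderiv ℝ P (r, θ') (1, 0) / r - m₁ := by
      rw [gibbs2 r θ' hrpos hθ'pos]
      field_simp
      ring
    rw [this] at key
    exact key
  have hwmono : MonotoneOn w (Icc ρ₀' ρ₁') := by
    apply monotoneOn_of_deriv_nonneg (convex_Icc _ _)
    · exact fun x hx => ((hwder x hx).continuousAt).continuousWithinAt
    · exact fun x hx =>
        ((hwder x (interior_subset hx)).differentiableAt).differentiableWithinAt
    · intro x hx
      have hx' := interior_subset hx
      rw [(hwder x hx').deriv]
      have := hm₁le hx' hθ'm
      linarith
  -- ρ-part estimate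
  set h : ℝ → ℝ := fun r =>
    ballisticH e s θ' r θ' - φ ρ' * (r - ρ') - m₁ / 2 * (r - ρ') ^ 2 with hhdef
  have hhder : ∀ r ∈ Icc ρ₀' ρ₁', HasDerivAt h (w r - w ρ') r := by
    intro r hr
    have key : HasDerivAt h
        (φ r - φ ρ' * 1 - m₁ / 2 * ((2 : ℕ) * (r - ρ') ^ (2 - 1) * 1)) r :=
      ((hHder r hr).sub (((hasDerivAt_id r).sub_const ρ').const_mul (φ ρ'))).sub
        ((((hasDerivAt_id r).sub_const ρ').pow 2).const_mul (m₁ / 2))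
    have : φ r - φ ρ' * 1 - m₁ / 2 * ((2 : ℕ) * (r - ρ') ^ (2 - 1) * 1)
        = w r - w ρ' := by
      simp only [hwdef]
      push_cast
      ring
    rw [this] at key
    exact key
  have hsubI : ∀ {x y : ℝ}, x ∈ Icc ρ₀' ρ₁' → y ∈ Icc ρ₀' ρ₁' →
      Icc x y ⊆ Icc ρ₀' ρ₁' := fun hx hy => Icc_subset_Icc hx.1 hy.2
  have E2 : h ρ' ≤ h ρ := by
    rcases le_total ρ' ρ with hle | hle
    · have hmono : MonotoneOn h (Icc ρ' ρ) := by
        apply monotoneOn_of_deriv_nonneg (convex_Icc _ _)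
        · exact fun x hx =>
            ((hhder x (hsubI hρ'm hρm hx)).continuousAt).continuousWithinAt
        · exact fun x hx => ((hhder x
            (hsubI hρ'm hρm (interior_subset hx))).differentiableAt).differentiableWithinAt
        · intro x hx
          have hx' : x ∈ Icc ρ₀' ρ₁' := hsubI hρ'm hρm (interior_subset hx)
          rw [(hhder x hx').deriv]
          have : w ρ' ≤ w x := hwmono hρ'm hx' (interior_subset hx).1
          linarith
      exact hmono ⟨le_rfl, hle⟩ ⟨hle, le_rfl⟩ hle
    · have hanti : AntitoneOn h (Icc ρ ρ') := by
        apply antitoneOn_of_deriv_nonpos (convex_Icc _ _)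
        · exact fun x hx =>
            ((hhder x (hsubI hρm hρ'm hx)).continuousAt).continuousWithinAt
        · exact fun x hx => ((hhder x
            (hsubI hρm hρ'm (interior_subset hx))).differentiableAt).differentiableWithinAt
        · intro x hx
          have hx' : x ∈ Icc ρ₀' ρ₁' := hsubI hρm hρ'm (interior_subset hx)
          rw [(hhder x hx').deriv]
          have : w x ≤ w ρ' := hwmono hx' hρ'm (interior_subset hx).2
          linarith
      exact hanti ⟨le_rfl, hle⟩ ⟨hle, le_rfl⟩ hle
  -- θ-part estimate
  set g : ℝ → ℝ := fun t =>
    ballisticH e s θ' ρ t - m₂ / 2 * (t - θ') ^ 2 with hgdef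
  have hgder : ∀ t ∈ Icc θ₀' θ₁',
      HasDerivAt g ((ρ * fderiv ℝ e (ρ, t) (0, 1) / t - m₂) * (t - θ')) t := by
    intro t ht
    have htpos : 0 < t := lt_of_lt_of_le hθ₀ ht.1
    have de := slice_snd' (hede hρpos htpos)
    have ds := slice_snd' (hsde hρpos htpos)
    have key : HasDerivAt g
        ((ρ * fderiv ℝ e (ρ, t) (0, 1) - θ' * (ρ * fderiv ℝ s (ρ, t) (0, 1))) -
          m₂ / 2 * ((2 : ℕ) * (t - θ') ^ (2 - 1) * 1)) t :=
      ((de.const_mul ρ).sub ((ds.const_mul ρ).const_mul θ')).sub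
        ((((hasDerivAt_id t).sub_const θ').pow 2).const_mul (m₂ / 2))
    have : (ρ * fderiv ℝ e (ρ, t) (0, 1) - θ' * (ρ * fderiv ℝ s (ρ, t) (0, 1))) -
          m₂ / 2 * ((2 : ℕ) * (t - θ') ^ (2 - 1) * 1)
        = (ρ * fderiv ℝ e (ρ, t) (0, 1) / t - m₂) * (t - θ') := by
      rw [gibbs1 ρ t hρpos htpos]
      push_cast
      field_simp
    rw [this] at key
    exact key
  have hsubJ : ∀ {x y : ℝ}, x ∈ Icc θ₀' θ₁' → y ∈ Icc θ₀' θ₁' →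
      Icc x y ⊆ Icc θ₀' θ₁' := fun hx hy => Icc_subset_Icc hx.1 hy.2
  have E1 : g θ' ≤ g θ := by
    rcases le_total θ' θ with hle | hle
    · have hmono : MonotoneOn g (Icc θ' θ) := by
        apply monotoneOn_of_deriv_nonneg (convex_Icc _ _)
        · exact fun x hx =>
            ((hgder x (hsubJ hθ'm hθm hx)).continuousAt).continuousWithinAt
        · exact fun x hx => ((hgder x
            (hsubJ hθ'm hθm (interior_subset hx))).differentiableAt).differentiableWithinAt
        · intro x hx
          have hx' : x ∈ Icc θ₀' θ₁' := hsubJ hθ'm hθm (interior_subset hx)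
          rw [(hgder x hx').deriv]
          have h1 := hm₂le hρm hx'
          have h2 : θ' ≤ x := (interior_subset hx).1
          have : 0 ≤ ρ * fderiv ℝ e (ρ, x) (0, 1) / x - m₂ := by linarith
          exact mul_nonneg this (by linarith)
      exact hmono ⟨le_rfl, hle⟩ ⟨hle, le_rfl⟩ hle
    · have hanti : AntitoneOn g (Icc θ θ') := by
        apply antitoneOn_of_deriv_nonpos (convex_Icc _ _)
        · exact fun x hx =>
            ((hgder x (hsubJ hθm hθ'm hx)).continuousAt).continuousWithinAt
        · exact fun x hx => ((hgder x
            (hsubJ hθm hθ'm (interior_subset hx))).differentiableAt).differentiableWithinAt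
        · intro x hx
          have hx' : x ∈ Icc θ₀' θ₁' := hsubJ hθm hθ'm (interior_subset hx)
          rw [(hgder x hx').deriv]
          have h1 := hm₂le hρm hx'
          have h2 : x ≤ θ' := (interior_subset hx).2
          have h3 : 0 ≤ ρ * fderiv ℝ e (ρ, x) (0, 1) / x - m₂ := by linarith
          exact mul_nonpos_of_nonneg_of_nonpos h3 (by linarith)
      exact hanti ⟨le_rfl, hle⟩ ⟨hle, le_rfl⟩ hle
  -- combine
  have E1' : ballisticH e s θ' ρ θ' + m₂ / 2 * (θ - θ') ^ 2 ≤ ballisticH e s θ' ρ θ := by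
    have := E1
    simp only [hgdef] at this
    nlinarith [this]
  have E2' : ballisticH e s θ' ρ' θ' + φ ρ' * (ρ - ρ') + m₁ / 2 * (ρ - ρ') ^ 2
      ≤ ballisticH e s θ' ρ θ' := by
    have := E2
    simp only [hhdef] at this
    nlinarith [this]
  have t1 : min m₁ m₂ / 2 * (ρ - ρ') ^ 2 ≤ m₁ / 2 * (ρ - ρ') ^ 2 :=
    mul_le_mul_of_nonneg_right (by have := min_le_left m₁ m₂; linarith) (sq_nonneg _)
  have t2 : min m₁ m₂ / 2 * (θ - θ') ^ 2 ≤ m₂ / 2 * (θ - θ') ^ 2 :=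
    mul_le_mul_of_nonneg_right (by have := min_le_right m₁ m₂; linarith) (sq_nonneg _)
  rw [relEntropy, hderivH, sq_abs, sq_abs, mul_add]
  linarith
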